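/- Let n ≥ 2, let P be the set of the v = 2^n − 1 non-zero vectors of 𝔽_2^n, and for each k let b_k denote the number of k-element subsets of P whose elements sum to zero. Then for 2 ≤ k ≤ v − 1 one has (k+1)·b_{k+1} + b_k + (v − k + 1)·b_{k−1} = C(v, k), where C(v,k) is the binomial coefficient. -/

import Mathlib

open Finset

private lemma aux10 {V : Type*} [Fintype V] [DecidableEq V] [AddCommGroup V]
    (hneg : ∀ x : V, -x = x) (k : ℕ) (hk1 : 1 ≤ k)
    (hkv : k ≤ Fintype.card V - 1) :
    (k + 1) * (univ.filter (fun s : Finset V =>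
        (∀ w ∈ s, w ≠ 0) ∧ s.card = k + 1 ∧ (∑ w ∈ s, w) = 0)).card
      + (univ.filter (fun s : Finset V =>
        (∀ w ∈ s, w ≠ 0) ∧ s.card = k ∧ (∑ w ∈ s, w) = 0)).card
      + (Fintype.card V - 1 - k + 1) * (univ.filter (fun s : Finset V =>
        (∀ w ∈ s, w ≠ 0) ∧ s.card = k - 1 ∧ (∑ w ∈ s, w) = 0)).card
      = Nat.choose (Fintype.card V - 1) k := by
  classical
  have hself : ∀ x : V, x + x = 0 := by
    intro x
    nth_rewrite 1 [← hneg x]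
    exact neg_add_cancel x
  set v := Fintype.card V - 1 with hv
  set P : Finset V := univ.filter (fun x => x ≠ 0) with hP
  have hPcard : P.card = v := by
    rw [hP, filter_ne', card_erase_of_mem (mem_univ 0), card_univ]
  have hPmem : ∀ x : V, x ∈ P ↔ x ≠ 0 := by
    intro x; simp [hP]
  set A : Finset (Finset V) :=
    univ.filter (fun s : Finset V => (∀ w ∈ s, w ≠ 0) ∧ s.card = k) with hA
  have hAmem : ∀ s : Finset V, s ∈ A ↔ (∀ w ∈ s, w ≠ 0) ∧ s.card = k := by
    intro s; simp [hA]
  have hAcard : A.card = v.choose k := by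
    have hEq : A = P.powersetCard k := by
      ext s
      simp only [hAmem, mem_powersetCard, Finset.subset_iff, hPmem]
    rw [hEq, card_powersetCard, hPcard]
  set B : ℕ → Finset (Finset V) := fun j => univ.filter (fun s : Finset V =>
      (∀ w ∈ s, w ≠ 0) ∧ s.card = j ∧ (∑ w ∈ s, w) = 0) with hB
  have hBmem : ∀ j, ∀ s : Finset V,
      s ∈ B j ↔ (∀ w ∈ s, w ≠ 0) ∧ s.card = j ∧ (∑ w ∈ s, w) = 0 := by
    intro j s; simp [hB]
  -- partition of A by the behaviour of the sum
  set A1 : Finset (Finset V) :=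
    (A.filter (fun s => ¬ (∑ w ∈ s, w) = 0)).filter (fun s => (∑ w ∈ s, w) ∈ s) with hA1def
  set A2 : Finset (Finset V) :=
    (A.filter (fun s => ¬ (∑ w ∈ s, w) = 0)).filter (fun s => ¬ (∑ w ∈ s, w) ∈ s) with hA2def
  have hA1mem : ∀ s : Finset V, s ∈ A1 ↔
      ((∀ w ∈ s, w ≠ 0) ∧ s.card = k) ∧ (∑ w ∈ s, w) ≠ 0 ∧ (∑ w ∈ s, w) ∈ s := by
    intro s
    simp only [hA1def, mem_filter, hAmem, Ne, and_assoc]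
  have hA2mem : ∀ s : Finset V, s ∈ A2 ↔
      ((∀ w ∈ s, w ≠ 0) ∧ s.card = k) ∧ (∑ w ∈ s, w) ≠ 0 ∧ (∑ w ∈ s, w) ∉ s := by
    intro s
    simp only [hA2def, mem_filter, hAmem, Ne, and_assoc]
  have hsplit : (A.filter (fun s => (∑ w ∈ s, w) = 0)).card + A1.card + A2.card = A.card := by
    have h1 := card_filter_add_card_filter_not
      (s := A) (p := fun s : Finset V => (∑ w ∈ s, w) = 0)
    have h2 := card_filter_add_card_filter_not
      (s := A.filter (fun s : Finset V => ¬ (∑ w ∈ s, w) = 0))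
      (p := fun s : Finset V => (∑ w ∈ s, w) ∈ s)
    rw [hA1def, hA2def]
    omega
  -- the zero-sum part is B k
  have hA0 : A.filter (fun s => (∑ w ∈ s, w) = 0) = B k := by
    ext s
    simp only [mem_filter, hAmem, hBmem]
    tauto
  -- σ ∈ s part
  have hA1 : A1.card = (v - k + 1) * (B (k - 1)).card := by
    have hbij : A1.card = ((B (k - 1)).sigma (fun T => P \ T)).card := by
      apply card_nbij' (fun s => ⟨s.erase (∑ w ∈ s, w), ∑ w ∈ s, w⟩)
        (fun p => insert p.2 p.1)
      · intro s hs
        rw [mem_coe, hA1mem] at hs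
        obtain ⟨⟨hs0, hcard⟩, hσ0, hσs⟩ := hs
        rw [mem_coe, mem_sigma]
        constructor
        · rw [hBmem]
          refine ⟨fun w hw => hs0 w (mem_of_mem_erase hw), ?_, ?_⟩
          · rw [card_erase_of_mem hσs, hcard]
          · have h := Finset.sum_erase_add s (fun x => x) hσs
            exact add_eq_right.mp h
        · rw [mem_sdiff, hPmem]
          exact ⟨hσ0, notMem_erase _ _⟩
      · intro p hp
        rw [mem_coe, mem_sigma, hBmem, mem_sdiff, hPmem] at hp
        obtain ⟨⟨hT0, hTcard, hTsum⟩, hx0, hxT⟩ := hp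
        have hsum : (∑ w ∈ insert p.2 p.1, w) = p.2 := by
          rw [Finset.sum_insert hxT, hTsum, add_zero]
        rw [mem_coe, hA1mem, hsum]
        refine ⟨⟨?_, ?_⟩, hx0, mem_insert_self _ _⟩
        · intro w hw
          rcases mem_insert.mp hw with h | h
          · exact h ▸ hx0
          · exact hT0 w h
        · rw [card_insert_of_notMem hxT, hTcard]; omega
      · intro s hs
        rw [mem_coe, hA1mem] at hs
        exact insert_erase hs.2.2
      · rintro ⟨T, x⟩ hp
        rw [mem_coe, mem_sigma, hBmem, mem_sdiff, hPmem] at hp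
        obtain ⟨⟨hT0, hTcard, hTsum⟩, hx0, hxT⟩ := hp
        have hsum : (∑ w ∈ insert x T, w) = x := by
          rw [Finset.sum_insert hxT, hTsum, add_zero]
        simp only [hsum, erase_insert hxT]
    rw [hbij, card_sigma]
    have hfiber : ∀ T ∈ B (k - 1), (P \ T).card = v - k + 1 := by
      intro T hT
      rw [hBmem] at hT
      have hTP : T ⊆ P := fun x hx => (hPmem x).mpr (hT.1 x hx)
      rw [card_sdiff_of_subset hTP, hPcard, hT.2.1]
      omega
    rw [Finset.sum_congr rfl hfiber, Finset.sum_const, smul_eq_mul, mul_comm]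
  -- σ ∉ s part
  have hA2 : A2.card = (k + 1) * (B (k + 1)).card := by
    have hbij : A2.card = ((B (k + 1)).sigma (fun U => U)).card := by
      apply card_nbij' (fun s => ⟨insert (∑ w ∈ s, w) s, ∑ w ∈ s, w⟩)
        (fun p => p.1.erase p.2)
      · intro s hs
        rw [mem_coe, hA2mem] at hs
        obtain ⟨⟨hs0, hcard⟩, hσ0, hσs⟩ := hs
        rw [mem_coe, mem_sigma]
        refine ⟨?_, mem_insert_self _ _⟩
        rw [hBmem]
        refine ⟨?_, ?_, ?_⟩
        · intro w hw
          rcases mem_insert.mp hw with h | h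
          · exact h ▸ hσ0
          · exact hs0 w h
        · rw [card_insert_of_notMem hσs, hcard]
        · rw [Finset.sum_insert hσs]
          exact hself _
      · rintro ⟨U, u⟩ hp
        rw [mem_coe, mem_sigma, hBmem] at hp
        obtain ⟨⟨hU0, hUcard, hUsum⟩, huU⟩ := hp
        have hsum : (∑ w ∈ U.erase u, w) = u := by
          have h := Finset.sum_erase_add U (fun x => x) huU
          rw [hUsum] at h
          have : (∑ w ∈ U.erase u, w) = -u := by
            rw [eq_neg_iff_add_eq_zero]; exact h
          rw [this, hneg]
        rw [mem_coe, hA2mem, hsum]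
        refine ⟨⟨fun w hw => hU0 w (mem_of_mem_erase hw), ?_⟩,
          hU0 u huU, notMem_erase _ _⟩
        rw [card_erase_of_mem huU, hUcard]
        omega
      · intro s hs
        rw [mem_coe, hA2mem] at hs
        exact erase_insert hs.2.2
      · rintro ⟨U, u⟩ hp
        rw [mem_coe, mem_sigma, hBmem] at hp
        obtain ⟨⟨hU0, hUcard, hUsum⟩, huU⟩ := hp
        have hsum : (∑ w ∈ U.erase u, w) = u := by
          have h := Finset.sum_erase_add U (fun x => x) huU
          rw [hUsum] at h
          have : (∑ w ∈ U.erase u, w) = -u := by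
            rw [eq_neg_iff_add_eq_zero]; exact h
          rw [this, hneg]
        simp only [hsum, insert_erase huU]
    rw [hbij, card_sigma]
    have hfiber : ∀ U ∈ B (k + 1), U.card = k + 1 := by
      intro U hU; rw [hBmem] at hU; exact hU.2.1
    rw [Finset.sum_congr rfl hfiber, Finset.sum_const, smul_eq_mul, mul_comm]
  have key : (B k).card + (v - k + 1) * (B (k - 1)).card
      + (k + 1) * (B (k + 1)).card = v.choose k := by
    rw [← hAcard, ← hsplit, hA0, hA1, hA2]
  calc (k + 1) * (B (k + 1)).card + (B k).card + (v - k + 1) * (B (k - 1)).card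
      = (B k).card + (v - k + 1) * (B (k - 1)).card + (k + 1) * (B (k + 1)).card := by
        ring
    _ = v.choose k := key

theorem stmt_10 (n : ℕ) (hn : 2 ≤ n) (k : ℕ) (hk2 : 2 ≤ k)
    (hkv : k ≤ 2 ^ n - 1 - 1)
    (b : ℕ → ℕ)
    (hb : ∀ j, b j = (Finset.univ.filter (fun s : Finset (Fin n → ZMod 2) =>
      (∀ w ∈ s, w ≠ 0) ∧ s.card = j ∧ (∑ w ∈ s, w) = 0)).card) :
    (k + 1) * b (k + 1) + b k + (2 ^ n - 1 - k + 1) * b (k - 1) =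
      Nat.choose (2 ^ n - 1) k := by
  have hneg : ∀ x : Fin n → ZMod 2, -x = x := by
    have h2 : ∀ a : ZMod 2, -a = a := by decide
    intro x; funext i; exact h2 (x i)
  have hcard : Fintype.card (Fin n → ZMod 2) = 2 ^ n := by
    rw [Fintype.card_fun, ZMod.card, Fintype.card_fin]
  have h2n : 2 ^ n ≥ 4 := by
    calc (4 : ℕ) = 2 ^ 2 := rfl
    _ ≤ 2 ^ n := Nat.pow_le_pow_right (by norm_num) hn
  have := aux10 hneg k (by omega) (by omega)
  rw [hcard] at this
  simp only [hb]
  exact this
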